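/- Let G be a P₆-free graph and Ω a potential maximal clique in G. Suppose v₁, v₂ ∈ Ω are nonadjacent and there is exactly one component D₀ of G − Ω with {v₁, v₂} ⊆ N(D₀). Then for any components D₁, D₂ of G − Ω different from D₀ with v₁ ∈ N(D₁) and v₂ ∈ N(D₂), we have Ω = N(D₀) ∪ N(D₁) ∪ N(D₂) ∪ ((N(v₁) ∩ N(v₂)) \ D₀). -/

import Mathlib

open SimpleGraph

variable {V : Type*}

/-- `D` is (the vertex set of) a connected component of `G - S`. -/
def IsCompOf (G : SimpleGraph V) (S D : Set V) : Prop :=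
  D.Nonempty ∧ Disjoint D S ∧ (G.induce D).Connected ∧
    ∀ v ∈ D, ∀ w : V, G.Adj v w → w ∉ S → w ∈ D

/-- The open neighborhood `N(D)` of a vertex set `D`. -/
def nbhd (G : SimpleGraph V) (D : Set V) : Set V :=
  {v | v ∉ D ∧ ∃ d ∈ D, G.Adj v d}

/-- The closed neighborhood `N[D]` of a vertex set `D`. -/
def closedNbhd (G : SimpleGraph V) (D : Set V) : Set V :=
  D ∪ nbhd G D

/-- `D` is full to `S`: every vertex of `S` has a neighbor in `D`. -/
def FullTo (G : SimpleGraph V) (S D : Set V) : Prop :=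
  ∀ s ∈ S, ∃ d ∈ D, G.Adj s d

/-- `S` is a minimal separator: `G - S` has at least two components full to `S`. -/
def IsMinSep (G : SimpleGraph V) (S : Set V) : Prop :=
  ∃ D₁ D₂ : Set V, IsCompOf G S D₁ ∧ IsCompOf G S D₂ ∧ D₁ ≠ D₂ ∧
    FullTo G S D₁ ∧ FullTo G S D₂

/-- A graph is `P₆`-free if it contains no induced path on 6 vertices. -/
def P6Free (G : SimpleGraph V) : Prop :=
  IsEmpty (pathGraph 6 ↪g G)

/-- `Ω` is a potential maximal clique of `G`. -/
def IsPMC (G : SimpleGraph V) (Ω : Set V) : Prop :=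
  (∀ D : Set V, IsCompOf G Ω D → nbhd G D ≠ Ω) ∧
  (∀ u ∈ Ω, ∀ v ∈ Ω, u ≠ v → ¬ G.Adj u v →
    ∃ D : Set V, IsCompOf G Ω D ∧ u ∈ nbhd G D ∧ v ∈ nbhd G D)


namespace Statement11Aux

variable {G : SimpleGraph V} {u v : V}


lemma exists_walk_take (p : G.Walk u v) (i : ℕ) (hi : i ≤ p.length) :
    ∃ q : G.Walk u (p.getVert i), q.length = i := by
  induction p generalizing i with
  | nil =>
    simp only [Walk.length_nil, Nat.le_zero] at hi
    subst hi; exact ⟨.nil, rfl⟩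
  | cons h q ih =>
    cases i with
    | zero => exact ⟨.nil, rfl⟩
    | succ i =>
      obtain ⟨r, hr⟩ := ih i (by simpa using hi)
      exact ⟨.cons h (r.copy rfl (by simp [Walk.getVert_cons_succ])), by simp [hr]⟩

lemma exists_walk_drop (p : G.Walk u v) (i : ℕ) :
    ∃ q : G.Walk (p.getVert i) v, q.length = p.length - i := by
  induction p generalizing i with
  | nil => exact ⟨.nil, by simp⟩
  | cons h q ih =>
    cases i with
    | zero => exact ⟨.cons h q, by simp; rfl⟩
    | succ i =>
      obtain ⟨r, hr⟩ := ih i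
      exact ⟨r.copy (by simp [Walk.getVert_cons_succ]) rfl, by simp [hr]⟩

lemma exists_geodesic (H : SimpleGraph V) {u v : V} (h : H.Reachable u v) :
    ∃ n, ∃ f : ℕ → V, f 0 = u ∧ f n = v ∧
      (∀ i, i < n → H.Adj (f i) (f (i+1))) ∧
      (∀ i j, i < j → j ≤ n → f i ≠ f j) ∧
      (∀ i j, i + 1 < j → j ≤ n → ¬ H.Adj (f i) (f j)) := by
  obtain ⟨p, hp⟩ := h.exists_walk_length_eq_dist
  refine ⟨p.length, p.getVert, p.getVert_zero, p.getVert_length, fun i hi => p.adj_getVert_succ hi, ?_, ?_⟩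
  · intro i j hij hj heq
    obtain ⟨q, hq⟩ := exists_walk_take p i (le_trans (le_of_lt hij) hj)
    obtain ⟨r, hr⟩ := exists_walk_drop p j
    have := H.dist_le (q.append (r.copy heq.symm rfl))
    rw [Walk.length_append, hq, Walk.length_copy, hr, hp] at this
    omega
  · intro i j hij hj hadj
    obtain ⟨q, hq⟩ := exists_walk_take p i (by omega)
    obtain ⟨r, hr⟩ := exists_walk_drop p j
    have := H.dist_le (q.append (Walk.cons hadj r))
    rw [Walk.length_append, hq, Walk.length_cons, hr, hp] at this
    omega

section helpers
variable {G : SimpleGraph V} {Ω D D' : Set V}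

lemma not_adj_comp (h : ¬ x ∈ nbhd G D) (hx : x ∉ D) {d : V} (hd : d ∈ D) : ¬ G.Adj x d :=
  fun ha => h ⟨hx, d, hd, ha⟩

lemma comp_subset_of_mem (hD : IsCompOf G Ω D) (hD' : IsCompOf G Ω D') {w : V}
    (hw : w ∈ D) (hw' : w ∈ D') : D ⊆ D' := by
  intro d hd
  obtain ⟨p⟩ := hD.2.2.1.preconnected ⟨w, hw⟩ ⟨d, hd⟩
  have claim : ∀ (a b : ↥D) (p : (G.induce D).Walk a b), a.val ∈ D' → b.val ∈ D' := by
    intro a b p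
    induction p with
    | nil => exact id
    | @cons a y b h q ih =>
      intro ha
      exact ih (hD'.2.2.2 a.val ha y.val h (Set.disjoint_left.mp hD.2.1 y.2))
  exact claim _ _ p hw'

lemma comp_eq_of_mem (hD : IsCompOf G Ω D) (hD' : IsCompOf G Ω D') {w : V}
    (hw : w ∈ D) (hw' : w ∈ D') : D = D' :=
  subset_antisymm (comp_subset_of_mem hD hD' hw hw') (comp_subset_of_mem hD' hD hw' hw)

lemma comp_ne_mem (hD : IsCompOf G Ω D) (hD' : IsCompOf G Ω D') (hne : D ≠ D') {d d' : V}
    (hd : d ∈ D) (hd' : d' ∈ D') : d ≠ d' := by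
  rintro rfl; exact hne (comp_eq_of_mem hD hD' hd hd')

lemma comp_not_adj (hD : IsCompOf G Ω D) (hD' : IsCompOf G Ω D') (hne : D ≠ D') {d d' : V}
    (hd : d ∈ D) (hd' : d' ∈ D') : ¬ G.Adj d d' := by
  intro ha
  have hd'Ω : d' ∉ Ω := Set.disjoint_left.mp hD'.2.1 hd'
  exact hne (comp_eq_of_mem hD hD' hd (hD'.2.2.2 d' hd' d ha.symm (Set.disjoint_left.mp hD.2.1 hd)))

lemma nbhd_comp_subset (hD : IsCompOf G Ω D) : nbhd G D ⊆ Ω := by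
  rintro w ⟨hwD, d, hd, hadj⟩
  by_contra hw
  exact hwD (hD.2.2.2 d hd w hadj.symm hw)

end helpers

/-- The restriction of `G` to edges inside `S`. -/
def restrictG (G : SimpleGraph V) (S : Set V) : SimpleGraph V where
  Adj a b := G.Adj a b ∧ a ∈ S ∧ b ∈ S
  symm := ⟨fun a b ⟨h, ha, hb⟩ => ⟨h.symm, hb, ha⟩⟩
  loopless := ⟨fun a ⟨h, _, _⟩ => G.loopless.irrefl a h⟩

lemma restrictG_adj {G : SimpleGraph V} {S : Set V} {a b : V} :
    (restrictG G S).Adj a b ↔ G.Adj a b ∧ a ∈ S ∧ b ∈ S := Iff.rfl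

lemma reach_restrict {G : SimpleGraph V} {Ω D : Set V} (hD : IsCompOf G Ω D) {S : Set V}
    (hDS : D ⊆ S) {a b : V} (ha : a ∈ D) (hb : b ∈ D) : (restrictG G S).Reachable a b := by
  obtain ⟨p⟩ := hD.2.2.1.preconnected ⟨a, ha⟩ ⟨b, hb⟩
  have claim : ∀ (c d : ↥D), (G.induce D).Walk c d → (restrictG G S).Reachable c.val d.val := by
    intro c d p
    induction p with
    | nil => exact Reachable.refl _
    | @cons c y d h q ih =>
      have e : (restrictG G S).Adj c.val y.val := ⟨h, hDS c.2, hDS y.2⟩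
      exact e.reachable.trans ih
  exact claim _ _ p


variable {G : SimpleGraph V}

lemma connector {Ω D : Set V} (hD : IsCompOf G Ω D) {u v : V}
    (hu : u ∈ nbhd G D) (hv : v ∈ nbhd G D) (hne : u ≠ v) (hna : ¬ G.Adj u v) :
    ∃ n, 2 ≤ n ∧ ∃ f : ℕ → V, f 0 = u ∧ f n = v ∧
      (∀ i, 0 < i → i < n → f i ∈ D) ∧
      (∀ i, i < n → G.Adj (f i) (f (i+1))) ∧
      (∀ i j, i < j → j ≤ n → f i ≠ f j) ∧
      (∀ i j, i + 1 < j → j ≤ n → ¬ G.Adj (f i) (f j)) := by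
  obtain ⟨huD, d, hd, hud⟩ := hu
  obtain ⟨hvD, d', hd', hvd'⟩ := hv
  set S : Set V := D ∪ {u, v} with hS
  have hDS : D ⊆ S := Set.subset_union_left
  have huS : u ∈ S := Set.mem_union_right _ (by simp)
  have hvS : v ∈ S := Set.mem_union_right _ (by simp)
  have hreach : (restrictG G S).Reachable u v := by
    have e1 : (restrictG G S).Adj u d := ⟨hud, huS, hDS hd⟩
    have e2 : (restrictG G S).Adj d' v := ⟨hvd'.symm, hDS hd', hvS⟩
    exact (e1.reachable.trans (reach_restrict hD hDS hd hd')).trans e2.reachable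
  obtain ⟨n, f, hf0, hfn, hadj, hinj, hnadj⟩ := exists_geodesic (restrictG G S) hreach
  have hn2 : 2 ≤ n := by
    rcases Nat.lt_or_ge n 2 with h | h
    · interval_cases n
      · exact absurd (hf0 ▸ hfn ▸ rfl) hne
      · exact absurd (hf0 ▸ hfn ▸ (hadj 0 (by omega)).1) hna
    · exact h
  have hmemS : ∀ i ≤ n, f i ∈ S := by
    intro i hi
    rcases Nat.lt_or_ge i n with h | h
    · exact (hadj i h).2.1
    · have : i = n := le_antisymm hi h
      rw [this, hfn]; exact hvS
  refine ⟨n, hn2, f, hf0, hfn, ?_, fun i hi => (hadj i hi).1, hinj, ?_⟩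
  · intro i hi0 hin
    have := hmemS i (le_of_lt hin)
    rcases this with h | h
    · exact h
    · exfalso
      rcases h with h | h
      · exact hinj 0 i hi0 (le_of_lt hin) (by rw [hf0, h])
      · exact hinj i n hin le_rfl (by rw [hfn, h])
  · intro i j hij hj hGadj
    exact hnadj i j hij hj ⟨hGadj, hmemS i (by omega), hmemS j hj⟩

lemma exists_comp_containing (G : SimpleGraph V) (Ω : Set V) (w : V) (hw : w ∉ Ω) :
    ∃ D, IsCompOf G Ω D ∧ w ∈ D := by
  set K := restrictG G Ωᶜ with hK
  set D : Set V := {u | K.Reachable w u} with hD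
  have hwD : w ∈ D := Reachable.refl w
  have hnotΩ : ∀ u ∈ D, u ∉ Ω := by
    intro u hu
    obtain ⟨p⟩ := hu
    have claim : ∀ (a b : V), K.Walk a b → a ∉ Ω → b ∉ Ω := by
      intro a b p
      induction p with
      | nil => exact id
      | @cons a y b h q ih => exact fun _ => ih h.2.2
    exact claim w u p hw
  have hclosed : ∀ v ∈ D, ∀ z : V, G.Adj v z → z ∉ Ω → z ∈ D := by
    intro v hv z hadj hz
    have e : K.Adj v z := ⟨hadj, hnotΩ v hv, hz⟩
    exact Reachable.trans hv e.reachable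
  refine ⟨D, ⟨⟨w, hwD⟩, Set.disjoint_left.mpr hnotΩ, ?_, hclosed⟩, hwD⟩
  rw [connected_iff]
  refine ⟨?_, ⟨⟨w, hwD⟩⟩⟩
  intro a b
  have claim : ∀ (c d : V) (p : K.Walk c d) (hc : c ∈ D) (hd : d ∈ D),
      (G.induce D).Reachable ⟨c, hc⟩ ⟨d, hd⟩ := by
    intro c d p
    induction p with
    | nil => exact fun hc hd => Reachable.refl _
    | @cons c y d h q ih =>
      intro hc hd
      have hy : y ∈ D := Reachable.trans hc h.reachable
      have e : (G.induce D).Adj ⟨c, hc⟩ ⟨y, hy⟩ := h.1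
      exact e.reachable.trans (ih hy hd)
  obtain ⟨p⟩ := (a.2 : K.Reachable w a.val)
  obtain ⟨q⟩ := (b.2 : K.Reachable w b.val)
  exact ((claim w a.val p hwD a.2).symm.trans (claim w b.val q hwD b.2))

lemma no_ind6 (hP6 : P6Free G) (N : ℕ) (hN : 5 ≤ N) (f : ℕ → V)
    (hinj : ∀ i j, i < j → j ≤ N → f i ≠ f j)
    (hadj : ∀ i, i < N → G.Adj (f i) (f (i+1)))
    (hnadj : ∀ i j, i + 1 < j → j ≤ N → ¬ G.Adj (f i) (f j)) : False := by
  apply hP6.false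
  refine ⟨⟨fun i => f i.val, ?_⟩, ?_⟩
  · intro i j hij
    by_contra hne
    rcases Nat.lt_or_ge i.val j.val with h | h
    · exact hinj i.val j.val h (by omega) hij
    · have h' : j.val < i.val := by
        rcases Nat.lt_or_ge j.val i.val with h' | h'
        · exact h'
        · exact absurd (Fin.ext (le_antisymm h' h)) hne
      exact hinj j.val i.val h' (by omega) hij.symm
  · intro a b
    simp only [Function.Embedding.coeFn_mk, pathGraph_adj]
    constructor
    · intro hGadj
      by_contra hpath
      push_neg at hpath
      rcases Nat.lt_trichotomy a.val b.val with h | h | h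
      · exact hnadj a.val b.val (by omega) (by omega) hGadj
      · exact G.loopless.irrefl _ (by rwa [show a = b from Fin.ext h] at hGadj)
      · exact hnadj b.val a.val (by omega) (by omega) hGadj.symm
    · rintro (h | h)
      · have := hadj a.val (by omega)
        rwa [show a.val + 1 = b.val from h] at this
      · have := hadj b.val (by omega)
        rw [show b.val + 1 = a.val from h] at this
        exact this.symm

lemma key (G : SimpleGraph V) (hP6 : P6Free G) (Ω : Set V) (hΩ : IsPMC G Ω)
    (v₁ v₂ x : V) (hv₁ : v₁ ∈ Ω) (hv₂ : v₂ ∈ Ω) (hx : x ∈ Ω) (hne : v₁ ≠ v₂) (hna : ¬ G.Adj v₁ v₂)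
    (D₀ : Set V) (hD₀ : IsCompOf G Ω D₀) (hc₁ : v₁ ∈ nbhd G D₀) (hc₂ : v₂ ∈ nbhd G D₀)
    (huniq : ∀ D, IsCompOf G Ω D → v₁ ∈ nbhd G D → v₂ ∈ nbhd G D → D = D₀)
    (D₁ D₂ : Set V) (hD₁ : IsCompOf G Ω D₁) (hD₂ : IsCompOf G Ω D₂)
    (hne₁ : D₁ ≠ D₀) (hne₂ : D₂ ≠ D₀)
    (hn₁ : v₁ ∈ nbhd G D₁) (hn₂ : v₂ ∈ nbhd G D₂)
    (hx0 : x ∉ nbhd G D₀) (hx1 : x ∉ nbhd G D₁) (hx2 : x ∉ nbhd G D₂) :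
    G.Adj x v₁ := by
  by_contra hxv₁
  have hΩnot : ∀ {E : Set V}, IsCompOf G Ω E → ∀ {y : V}, y ∈ Ω → y ∉ E := by
    intro E hE y hy hyE
    exact Set.disjoint_left.mp hE.2.1 hyE hy
  have hneΩ : ∀ {E : Set V}, IsCompOf G Ω E → ∀ {d y : V}, d ∈ E → y ∈ Ω → d ≠ y := by
    intro E hE d y hd hy heq
    exact hΩnot hE hy (heq ▸ hd)
  have hxv₁ne : x ≠ v₁ := by rintro rfl; exact hx0 hc₁
  have hxv₂ne : x ≠ v₂ := by rintro rfl; exact hx0 hc₂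
  obtain ⟨D, hD, hxD, hv₁D⟩ := hΩ.2 x hx v₁ hv₁ hxv₁ne hxv₁
  have hDD₀ : D ≠ D₀ := by rintro rfl; exact hx0 hxD
  have hDD₁ : D ≠ D₁ := by rintro rfl; exact hx1 hxD
  have hDD₂ : D ≠ D₂ := by rintro rfl; exact hx2 hxD
  have hv₂D : v₂ ∉ nbhd G D := fun h => hDD₀ (huniq D hD hv₁D h)
  have hD₁D₂ : D₁ ≠ D₂ := by rintro rfl; exact hne₁ (huniq D₁ hD₁ hn₁ hn₂)
  have hv₁D₂ : v₁ ∉ nbhd G D₂ := fun h => hne₂ (huniq D₂ hD₂ h hn₂)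
  have hv₂D₁ : v₂ ∉ nbhd G D₁ := fun h => hne₁ (huniq D₁ hD₁ hn₁ h)
  obtain ⟨n, hn2, f, hf0, hfn, hfD, hfadj, hfinj, hfnadj⟩ := connector hD hxD hv₁D hxv₁ne hxv₁
  have hclass : ∀ k, k ≤ n → (k = 0 ∧ f k = x) ∨ (0 < k ∧ k < n ∧ f k ∈ D) ∨ (k = n ∧ f k = v₁) := by
    intro k hk
    rcases Nat.eq_zero_or_pos k with rfl | hk0
    · exact Or.inl ⟨rfl, hf0⟩
    rcases eq_or_lt_of_le hk with rfl | hkn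
    · exact Or.inr (Or.inr ⟨rfl, hfn⟩)
    · exact Or.inr (Or.inl ⟨hk0, hkn, hfD k hk0 hkn⟩)
  obtain ⟨hv₁nD₁, c₁, hc₁D₁, hv₁c₁⟩ := hn₁
  obtain ⟨hv₂nD₂, c₂, hc₂D₂, hv₂c₂⟩ := hn₂
  rcases em (G.Adj x v₂) with hadj2 | hadj2
  · -- Case B: x adjacent to v₂
    set F : ℕ → V := fun i => if i = 0 then c₂ else if i = 1 then v₂ else
      if i ≤ n + 2 then f (i-2) else c₁ with hF
    have hF0 : F 0 = c₂ := by simp [hF]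
    have hF1 : F 1 = v₂ := by simp [hF]
    have hFf : ∀ i, 2 ≤ i → i ≤ n + 2 → F i = f (i - 2) := by
      intro i h1 h2
      simp only [hF]
      rw [if_neg (by omega), if_neg (by omega), if_pos h2]
    have hFl : F (n+3) = c₁ := by
      simp only [hF]
      rw [if_neg (by omega), if_neg (by omega), if_neg (by omega)]
    have master : ∀ i j, i < j → j ≤ n + 3 → F i ≠ F j ∧ (i + 1 < j → ¬ G.Adj (F i) (F j)) := by
      intro i j hij hj
      have hi4 : i = 0 ∨ i = 1 ∨ (2 ≤ i ∧ i ≤ n + 2) ∨ i = n + 3 := by omega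
      have hj4 : j = 0 ∨ j = 1 ∨ (2 ≤ j ∧ j ≤ n + 2) ∨ j = n + 3 := by omega
      rcases hi4 with rfl | rfl | ⟨hi1, hi2⟩ | rfl
      · rw [hF0]
        rcases hj4 with rfl | rfl | ⟨hj1, hj2⟩ | rfl
        · omega
        · rw [hF1]
          exact ⟨hneΩ hD₂ hc₂D₂ hv₂, fun hc => absurd hc (by omega)⟩
        · rw [hFf j hj1 hj2]
          rcases hclass (j-2) (by omega) with ⟨hk, he⟩ | ⟨hk0, hkn, he⟩ | ⟨hk, he⟩
          · rw [he]
            exact ⟨hneΩ hD₂ hc₂D₂ hx, fun _ h => not_adj_comp hx2 (hΩnot hD₂ hx) hc₂D₂ h.symm⟩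
          · exact ⟨comp_ne_mem hD₂ hD (Ne.symm hDD₂) hc₂D₂ he,
              fun _ => comp_not_adj hD₂ hD (Ne.symm hDD₂) hc₂D₂ he⟩
          · rw [he]
            exact ⟨hneΩ hD₂ hc₂D₂ hv₁, fun _ h => not_adj_comp hv₁D₂ (hΩnot hD₂ hv₁) hc₂D₂ h.symm⟩
        · rw [hFl]
          exact ⟨comp_ne_mem hD₂ hD₁ (Ne.symm hD₁D₂) hc₂D₂ hc₁D₁,
            fun _ => comp_not_adj hD₂ hD₁ (Ne.symm hD₁D₂) hc₂D₂ hc₁D₁⟩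
      · rw [hF1]
        rcases hj4 with rfl | rfl | ⟨hj1, hj2⟩ | rfl
        · omega
        · omega
        · rw [hFf j hj1 hj2]
          rcases hclass (j-2) (by omega) with ⟨hk, he⟩ | ⟨hk0, hkn, he⟩ | ⟨hk, he⟩
          · rw [he]
            exact ⟨hxv₂ne.symm, fun hc => absurd hc (by omega)⟩
          · exact ⟨(hneΩ hD he hv₂).symm, fun _ => not_adj_comp hv₂D (hΩnot hD hv₂) he⟩
          · rw [he]
            exact ⟨hne.symm, fun _ h => hna h.symm⟩
        · rw [hFl]
          exact ⟨(hneΩ hD₁ hc₁D₁ hv₂).symm, fun _ => not_adj_comp hv₂D₁ (hΩnot hD₁ hv₂) hc₁D₁⟩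
      · rw [hFf i hi1 hi2]
        rcases hj4 with rfl | rfl | ⟨hj1, hj2⟩ | rfl
        · omega
        · omega
        · rw [hFf j hj1 hj2]
          exact ⟨hfinj (i-2) (j-2) (by omega) (by omega),
            fun h => hfnadj (i-2) (j-2) (by omega) (by omega)⟩
        · rw [hFl]
          rcases hclass (i-2) (by omega) with ⟨hk, he⟩ | ⟨hk0, hkn, he⟩ | ⟨hk, he⟩
          · rw [he]
            exact ⟨(hneΩ hD₁ hc₁D₁ hx).symm, fun _ => not_adj_comp hx1 (hΩnot hD₁ hx) hc₁D₁⟩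
          · exact ⟨comp_ne_mem hD hD₁ hDD₁ he hc₁D₁, fun _ => comp_not_adj hD hD₁ hDD₁ he hc₁D₁⟩
          · rw [he]
            exact ⟨(hneΩ hD₁ hc₁D₁ hv₁).symm, fun hc => absurd hc (by omega)⟩
      · omega
    refine no_ind6 hP6 (n+3) (by omega) F
      (fun i j hij hj => (master i j hij hj).1) ?_
      (fun i j hij hj => (master i j (by omega) hj).2 hij)
    intro i hi
    have hi4 : i = 0 ∨ i = 1 ∨ (2 ≤ i ∧ i ≤ n + 1) ∨ i = n + 2 := by omega
    rcases hi4 with rfl | rfl | ⟨h1, h2⟩ | rfl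
    · rw [hF0, hF1]; exact hv₂c₂.symm
    · rw [hF1, hFf 2 (by omega) (by omega)]
      rw [show (2:ℕ) - 2 = 0 from rfl, hf0]
      exact hadj2.symm
    · rw [hFf i (by omega) (by omega), hFf (i+1) (by omega) (by omega)]
      have := hfadj (i-2) (by omega)
      rwa [show i - 2 + 1 = i + 1 - 2 by omega] at this
    · rw [hFf (n+2) (by omega) (by omega), hFl]
      rw [show n + 2 - 2 = n by omega, hfn]
      exact hv₁c₁
  · -- Case A: x not adjacent to v₂
    obtain ⟨m, hm2, g, hg0, hgm, hgD, hgadj, hginj, hgnadj⟩ := connector hD₀ hc₁ hc₂ hne hna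
    have hgclass : ∀ k, 0 < k → k ≤ m → (0 < k ∧ k < m ∧ g k ∈ D₀) ∨ (k = m ∧ g k = v₂) := by
      intro k hk0 hk
      rcases eq_or_lt_of_le hk with rfl | hkm
      · exact Or.inr ⟨rfl, hgm⟩
      · exact Or.inl ⟨hk0, hkm, hgD k hk0 hkm⟩
    set F : ℕ → V := fun i => if i ≤ n then f i else if i ≤ n + m then g (i - n) else c₂ with hF
    have hFf : ∀ i, i ≤ n → F i = f i := by
      intro i hi; simp only [hF]; rw [if_pos hi]
    have hFg : ∀ i, n < i → i ≤ n + m → F i = g (i - n) := by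
      intro i h1 h2; simp only [hF]; rw [if_neg (by omega), if_pos h2]
    have hFl : F (n+m+1) = c₂ := by
      simp only [hF]; rw [if_neg (by omega), if_neg (by omega)]
    have master : ∀ i j, i < j → j ≤ n + m + 1 → F i ≠ F j ∧ (i + 1 < j → ¬ G.Adj (F i) (F j)) := by
      intro i j hij hj
      have hi3 : i ≤ n ∨ (n < i ∧ i ≤ n + m) ∨ i = n + m + 1 := by omega
      have hj3 : j ≤ n ∨ (n < j ∧ j ≤ n + m) ∨ j = n + m + 1 := by omega
      rcases hi3 with hi | ⟨hi1, hi2⟩ | rfl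
      · rw [hFf i hi]
        rcases hj3 with hjn | ⟨hj1, hj2⟩ | rfl
        · rw [hFf j hjn]
          exact ⟨hfinj i j hij hjn, fun h => hfnadj i j h hjn⟩
        · rw [hFg j hj1 hj2]
          rcases hclass i hi with ⟨hk, he⟩ | ⟨hk0, hkn, he⟩ | ⟨hk, he⟩
          · rw [he]
            rcases hgclass (j-n) (by omega) (by omega) with ⟨hl0, hlm, hg'⟩ | ⟨hl, hg'⟩
            · exact ⟨(hneΩ hD₀ hg' hx).symm, fun _ => not_adj_comp hx0 (hΩnot hD₀ hx) hg'⟩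
            · rw [hg']
              exact ⟨hxv₂ne, fun _ => hadj2⟩
          · rcases hgclass (j-n) (by omega) (by omega) with ⟨hl0, hlm, hg'⟩ | ⟨hl, hg'⟩
            · exact ⟨comp_ne_mem hD hD₀ hDD₀ he hg', fun _ => comp_not_adj hD hD₀ hDD₀ he hg'⟩
            · rw [hg']
              exact ⟨hneΩ hD he hv₂, fun _ h => not_adj_comp hv₂D (hΩnot hD hv₂) he h.symm⟩
          · rw [he]
            constructor
            · rw [← hg0]
              exact hginj 0 (j-n) (by omega) (by omega)
            · intro hc
              rw [← hg0]
              exact hgnadj 0 (j-n) (by omega) (by omega)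
        · rw [hFl]
          rcases hclass i hi with ⟨hk, he⟩ | ⟨hk0, hkn, he⟩ | ⟨hk, he⟩
          · rw [he]
            exact ⟨(hneΩ hD₂ hc₂D₂ hx).symm, fun _ => not_adj_comp hx2 (hΩnot hD₂ hx) hc₂D₂⟩
          · exact ⟨comp_ne_mem hD hD₂ hDD₂ he hc₂D₂, fun _ => comp_not_adj hD hD₂ hDD₂ he hc₂D₂⟩
          · rw [he]
            exact ⟨(hneΩ hD₂ hc₂D₂ hv₁).symm, fun _ => not_adj_comp hv₁D₂ (hΩnot hD₂ hv₁) hc₂D₂⟩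
      · rw [hFg i hi1 hi2]
        rcases hj3 with hjn | ⟨hj1, hj2⟩ | rfl
        · omega
        · rw [hFg j hj1 hj2]
          exact ⟨hginj (i-n) (j-n) (by omega) (by omega),
            fun h => hgnadj (i-n) (j-n) (by omega) (by omega)⟩
        · rw [hFl]
          rcases hgclass (i-n) (by omega) (by omega) with ⟨hl0, hlm, hg'⟩ | ⟨hl, hg'⟩
          · exact ⟨comp_ne_mem hD₀ hD₂ (Ne.symm hne₂) hg' hc₂D₂,
              fun _ => comp_not_adj hD₀ hD₂ (Ne.symm hne₂) hg' hc₂D₂⟩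
          · rw [hg']
            exact ⟨(hneΩ hD₂ hc₂D₂ hv₂).symm, fun hc => absurd hc (by omega)⟩
      · omega
    refine no_ind6 hP6 (n+m+1) (by omega) F
      (fun i j hij hj => (master i j hij hj).1) ?_
      (fun i j hij hj => (master i j (by omega) hj).2 hij)
    intro i hi
    have hi3 : i < n ∨ (n ≤ i ∧ i < n + m) ∨ i = n + m := by omega
    rcases hi3 with hin | ⟨hi1, hi2⟩ | rfl
    · rw [hFf i (by omega), hFf (i+1) (by omega)]
      exact hfadj i hin
    · by_cases hin : i = n
      · subst hin
        rw [hFf i le_rfl, hFg (i+1) (by omega) (by omega), hfn, ← hg0,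
          show i + 1 - i = 1 by omega]
        simpa using hgadj 0 (by omega)
      · rw [hFg i (by omega) (by omega), hFg (i+1) (by omega) (by omega)]
        have := hgadj (i-n) (by omega)
        rwa [show i - n + 1 = i + 1 - n by omega] at this
    · rw [hFg (n+m) (by omega) (by omega), hFl]
      rw [show n + m - n = m by omega, hgm]
      exact hv₂c₂

end Statement11Aux

open Statement11Aux

/-- Deducing a PMC when the nonedge `v₁v₂` is covered by a unique component `D₀`. -/
theorem statement_11 [Fintype V] (G : SimpleGraph V) (hP6 : P6Free G)
    (Ω : Set V) (hΩ : IsPMC G Ω) (v₁ v₂ : V) (hv₁ : v₁ ∈ Ω) (hv₂ : v₂ ∈ Ω)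
    (hne : v₁ ≠ v₂) (hna : ¬ G.Adj v₁ v₂)
    (D₀ : Set V) (hD₀ : IsCompOf G Ω D₀)
    (hc₁ : v₁ ∈ nbhd G D₀) (hc₂ : v₂ ∈ nbhd G D₀)
    (huniq : ∀ D : Set V, IsCompOf G Ω D → v₁ ∈ nbhd G D → v₂ ∈ nbhd G D → D = D₀)
    (D₁ D₂ : Set V) (hD₁ : IsCompOf G Ω D₁) (hD₂ : IsCompOf G Ω D₂)
    (hne₁ : D₁ ≠ D₀) (hne₂ : D₂ ≠ D₀)
    (hn₁ : v₁ ∈ nbhd G D₁) (hn₂ : v₂ ∈ nbhd G D₂) :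
    Ω = nbhd G D₀ ∪ nbhd G D₁ ∪ nbhd G D₂ ∪
      ((G.neighborSet v₁ ∩ G.neighborSet v₂) \ D₀) := by
  apply subset_antisymm
  · intro y hy
    by_cases h0 : y ∈ nbhd G D₀
    · exact Or.inl (Or.inl (Or.inl h0))
    by_cases h1 : y ∈ nbhd G D₁
    · exact Or.inl (Or.inl (Or.inr h1))
    by_cases h2 : y ∈ nbhd G D₂
    · exact Or.inl (Or.inr h2)
    have a1 : G.Adj y v₁ :=
      key G hP6 Ω hΩ v₁ v₂ y hv₁ hv₂ hy hne hna D₀ hD₀ hc₁ hc₂ huniq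
        D₁ D₂ hD₁ hD₂ hne₁ hne₂ hn₁ hn₂ h0 h1 h2
    have a2 : G.Adj y v₂ :=
      key G hP6 Ω hΩ v₂ v₁ y hv₂ hv₁ hy hne.symm (fun h => hna h.symm) D₀ hD₀ hc₂ hc₁
        (fun D hD hu2 hu1 => huniq D hD hu1 hu2)
        D₂ D₁ hD₂ hD₁ hne₂ hne₁ hn₂ hn₁ h0 h2 h1
    exact Or.inr ⟨⟨a1.symm, a2.symm⟩, fun hyD => Set.disjoint_left.mp hD₀.2.1 hyD hy⟩
  · intro y hy
    rcases hy with ((h | h) | h) | ⟨⟨ha1, ha2⟩, hyD₀⟩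
    · exact nbhd_comp_subset hD₀ h
    · exact nbhd_comp_subset hD₁ h
    · exact nbhd_comp_subset hD₂ h
    · by_contra hyΩ
      obtain ⟨D, hD, hyD⟩ := exists_comp_containing G Ω y hyΩ
      have hv₁n : v₁ ∈ nbhd G D :=
        ⟨fun h => Set.disjoint_left.mp hD.2.1 h hv₁, y, hyD, ha1⟩
      have hv₂n : v₂ ∈ nbhd G D :=
        ⟨fun h => Set.disjoint_left.mp hD.2.1 h hv₂, y, hyD, ha2⟩
      exact hyD₀ (huniq D hD hv₁n hv₂n ▸ hyD)
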